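/- Let d > 2 and let X_n ⊂ ℝ^d be the 2^{d−1}-point design of maximum resolution at the points (±1/2, …, ±1/2) (even number of negative coordinates). Then every vertex v of the cube [−1,1]^d whose coordinates contain an odd number of entries equal to −1 satisfies min_{y ∈ X_n} ‖v − y‖ = √(d+8)/2; that is, the covering radius √(d+8)/2 of [−1,1]^d for this design is attained at these vertices. -/

import Mathlib

open Set

open Classical in
/-- The `2^{d-1}` design of maximum resolution: the points of `{-1/2, 1/2}^d` whose
coordinates contain an even number of entries equal to `-1/2`. -/
noncomputable def maxResDesign (d : ℕ) : Set (EuclideanSpace ℝ (Fin d)) :=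
  {y | (∀ i, y i = 1/2 ∨ y i = -(1/2)) ∧
    Even (Finset.univ.filter (fun i : Fin d => y i = -(1/2))).card}

private lemma odd_card_symmDiff {α : Type*} [DecidableEq α] {s t : Finset α}
    (hs : Odd s.card) (ht : Even t.card) : Odd (symmDiff s t).card := by
  have h1 : (symmDiff s t).card + (s ∩ t).card = (s ∪ t).card := by
    rw [symmDiff_eq_sup_sdiff_inf]
    exact Finset.card_sdiff_add_card_eq_card Finset.inter_subset_union
  have h2 := Finset.card_union_add_card_inter s t
  obtain ⟨a, ha⟩ := hs
  obtain ⟨b, hb⟩ := ht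
  rw [Nat.odd_iff]
  omega

open Classical in
private lemma sum_dsq {d : ℕ} (v y : EuclideanSpace ℝ (Fin d))
    (hv : ∀ i, v i = 1 ∨ v i = -1) (hy : ∀ i, y i = 1/2 ∨ y i = -(1/2)) :
    ∑ i, dist (v i) (y i) ^ 2
      = (d : ℝ)/4 + 2 * (Finset.univ.filter
          (fun i : Fin d => ¬(v i = -1 ↔ y i = -(1/2)))).card := by
  have h : ∀ i, dist (v i) (y i) ^ 2
      = 1/4 + (if ¬(v i = -1 ↔ y i = -(1/2)) then (2:ℝ) else 0) := by
    intro i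
    rw [Real.dist_eq, sq_abs]
    rcases hv i with h1 | h1 <;> rcases hy i with h2 | h2 <;>
      rw [h1, h2] <;> norm_num
  rw [Finset.sum_congr rfl (fun i _ => h i), Finset.sum_add_distrib,
    Finset.sum_const, ← Finset.sum_filter, Finset.sum_const, Finset.card_univ,
    Fintype.card_fin]
  push_cast
  ring

open Classical in
/-- For `d > 2`, every vertex `v` of the cube `[-1,1]^d` with an odd number of
coordinates equal to `-1` is at distance exactly `√(d+8)/2` from the `2^{d-1}` design of
maximum resolution; i.e. the covering radius `√(d+8)/2` of `[-1,1]^d` is attained at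
these vertices. -/
theorem infDist_odd_vertex_maxResDesign (d : ℕ) (hd : 2 < d)
    (v : EuclideanSpace ℝ (Fin d))
    (hv : ∀ i, v i = 1 ∨ v i = -1)
    (hodd : Odd (Finset.univ.filter (fun i : Fin d => v i = -1)).card) :
    Metric.infDist v (maxResDesign d) = Real.sqrt ((d : ℝ) + 8) / 2 := by
  have hd0 : 0 < d := by omega
  have h4 : Real.sqrt ((d:ℝ) + 8) / 2 = Real.sqrt (((d:ℝ) + 8)/4) := by
    rw [Real.sqrt_div (by positivity) 4,
      show Real.sqrt 4 = 2 by
        rw [show (4:ℝ) = 2 ^ 2 by norm_num, Real.sqrt_sq (by norm_num)]]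
  obtain ⟨i₀⟩ : Nonempty (Fin d) := ⟨⟨0, hd0⟩⟩
  set y : EuclideanSpace ℝ (Fin d) :=
    WithLp.toLp 2 (fun i => if i = i₀ then -(v i₀) / 2 else v i / 2) with hy
  have hyi : ∀ i, y i = if i = i₀ then -(v i₀) / 2 else v i / 2 := fun i => rfl
  have hy' : ∀ i, y i = 1/2 ∨ y i = -(1/2) := by
    intro i
    rw [hyi i]
    by_cases h : i = i₀
    · rw [if_pos h]
      rcases hv i₀ with h1 | h1 <;> rw [h1] <;> norm_num
    · rw [if_neg h]
      rcases hv i with h1 | h1 <;> rw [h1] <;> norm_num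
  -- even number of -1/2 coordinates for the witness
  have hcard : Even (Finset.univ.filter (fun i : Fin d => y i = -(1/2))).card := by
    rcases hv i₀ with h1 | h1
    · have hset : Finset.univ.filter (fun i : Fin d => y i = -(1/2))
          = insert i₀ (Finset.univ.filter (fun i : Fin d => v i = -1)) := by
        ext i
        simp only [Finset.mem_filter, Finset.mem_univ, true_and, Finset.mem_insert]
        by_cases h : i = i₀
        · rw [h, hyi i₀, if_pos rfl, h1]
          norm_num
        · rw [hyi i, if_neg h]
          simp only [h, false_or]
          rcases hv i with h2 | h2 <;> rw [h2] <;> norm_num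
      rw [hset, Finset.card_insert_of_notMem
        (by simp only [Finset.mem_filter, Finset.mem_univ, true_and, h1]; norm_num)]
      exact hodd.add_one
    · have hset : Finset.univ.filter (fun i : Fin d => y i = -(1/2))
          = (Finset.univ.filter (fun i : Fin d => v i = -1)).erase i₀ := by
        ext i
        simp only [Finset.mem_filter, Finset.mem_univ, true_and, Finset.mem_erase]
        by_cases h : i = i₀
        · rw [h, hyi i₀, if_pos rfl, h1]
          norm_num
        · rw [hyi i, if_neg h]
          simp only [ne_eq, h, not_false_iff, true_and]
          rcases hv i with h2 | h2 <;> rw [h2] <;> norm_num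
      rw [hset, Finset.card_erase_of_mem (by simp [h1])]
      exact Nat.Odd.sub_odd hodd odd_one
  have hmem : y ∈ maxResDesign d := ⟨hy', hcard⟩
  -- the mismatch set of the witness is {i₀}
  have hΔ : Finset.univ.filter (fun i : Fin d => ¬(v i = -1 ↔ y i = -(1/2))) = {i₀} := by
    ext i
    simp only [Finset.mem_filter, Finset.mem_univ, true_and, Finset.mem_singleton]
    by_cases h : i = i₀
    · rw [h, hyi i₀, if_pos rfl]
      simp only [iff_true]
      rcases hv i₀ with h1 | h1 <;> rw [h1] <;> norm_num
    · rw [hyi i, if_neg h]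
      simp only [h, iff_false, not_not]
      rcases hv i with h1 | h1 <;> rw [h1] <;> norm_num
  have hdist : dist v y = Real.sqrt (((d:ℝ) + 8)/4) := by
    rw [EuclideanSpace.dist_eq, sum_dsq v y hv hy', hΔ]
    congr 1
    norm_num
    ring
  -- lower bound for all design points
  have hlb : ∀ z ∈ maxResDesign d, Real.sqrt (((d:ℝ) + 8)/4) ≤ dist v z := by
    rintro z ⟨hz1, hz2⟩
    rw [EuclideanSpace.dist_eq, sum_dsq v z hv hz1]
    apply Real.sqrt_le_sqrt
    have hΔ' : Finset.univ.filter (fun i : Fin d => ¬(v i = -1 ↔ z i = -(1/2)))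
        = symmDiff (Finset.univ.filter (fun i : Fin d => v i = -1))
            (Finset.univ.filter (fun i : Fin d => z i = -(1/2))) := by
      ext i
      simp only [Finset.mem_symmDiff, Finset.mem_filter, Finset.mem_univ, true_and]
      tauto
    have hodd' : Odd (Finset.univ.filter
        (fun i : Fin d => ¬(v i = -1 ↔ z i = -(1/2)))).card := by
      rw [hΔ']
      exact odd_card_symmDiff hodd hz2
    have h1 : 1 ≤ (Finset.univ.filter
        (fun i : Fin d => ¬(v i = -1 ↔ z i = -(1/2)))).card := hodd'.pos
    have h1' : (1:ℝ) ≤ ((Finset.univ.filter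
        (fun i : Fin d => ¬(v i = -1 ↔ z i = -(1/2)))).card : ℝ) := by
      exact_mod_cast h1
    linarith
  refine le_antisymm ?_ ?_
  · rw [h4, ← hdist]
    exact Metric.infDist_le_dist_of_mem hmem
  · rw [h4]
    by_contra hcon
    push_neg at hcon
    obtain ⟨z, hz, hzlt⟩ := (Metric.infDist_lt_iff ⟨y, hmem⟩).mp hcon
    exact absurd hzlt (not_lt.mpr (hlb z hz))
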